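/- Let r, m > 0, 0 < a < 1, c > 0, and let I ⊂ (1, 1/a) be an open interval containing a point p_H. Suppose u : I → ℝ is differentiable and satisfies, for every p ∈ I: (a+1)/2 < u(p) < 1/p, r·(1−u(p))·(u(p)−a) = (1−p·u(p))/(c·p²·u(p)²), and u'(p) < 0. Define T(p) = −r·u(p)·(2u(p)−a−1) + m·(1−p·u(p)). Then T'(p_H) > 0. (In particular, −u(p_H) − p_H·u'(p_H) > 0, which is the transversality condition for the Hopf bifurcation.) -/

import Mathlib

/-- Transversality condition for the Hopf bifurcation: along the equilibrium
branch `u(p)` with `(a+1)/2 < u(p) < 1/p`, satisfying the equilibrium equation and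
`u'(p) < 0`, the trace `T(p) = -r u(p)(2u(p)-a-1) + m(1 - p u(p))` has positive
derivative at `p_H`; in particular `-u(p_H) - p_H u'(p_H) > 0`. -/
theorem stmt_15 (r m c a pH q₁ q₂ : ℝ) (hr : 0 < r) (hm : 0 < m) (hc : 0 < c)
    (ha0 : 0 < a) (ha1 : a < 1)
    (hsub : Set.Ioo q₁ q₂ ⊆ Set.Ioo 1 (1 / a)) (hmem : pH ∈ Set.Ioo q₁ q₂)
    (u u' : ℝ → ℝ)
    (hderiv : ∀ p ∈ Set.Ioo q₁ q₂, HasDerivAt u (u' p) p)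
    (hlow : ∀ p ∈ Set.Ioo q₁ q₂, (a + 1) / 2 < u p)
    (hhigh : ∀ p ∈ Set.Ioo q₁ q₂, u p < 1 / p)
    (heq : ∀ p ∈ Set.Ioo q₁ q₂,
      r * (1 - u p) * (u p - a) = (1 - p * u p) / (c * p ^ 2 * (u p) ^ 2))
    (hu' : ∀ p ∈ Set.Ioo q₁ q₂, u' p < 0) :
    0 < deriv (fun p => -r * u p * (2 * u p - a - 1) + m * (1 - p * u p)) pH ∧
    0 < -u pH - pH * u' pH := by
  -- basic facts at pH
  have hp1 : (1:ℝ) < pH := (hsub hmem).1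
  have hp0 : (0:ℝ) < pH := lt_trans one_pos hp1
  have hU : (a + 1) / 2 < u pH := hlow pH hmem
  have hU0 : 0 < u pH := lt_trans (by linarith) hU
  have hUhi : u pH < 1 / pH := hhigh pH hmem
  have hU1 : u pH < 1 := lt_of_lt_of_le hUhi (by
    rw [div_le_one hp0]; linarith)
  have hUa : a < u pH := by linarith
  have hpu : pH * u pH < 1 := by
    have := (mul_lt_mul_iff_right₀ hp0).2 hUhi
    rw [mul_one_div, div_self (ne_of_gt hp0)] at this
    exact this
  have h := hderiv pH hmem
  have hU' : u' pH < 0 := hu' pH hmem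
  -- the constraint function vanishes on the interval
  have hzero : ∀ p ∈ Set.Ioo q₁ q₂,
      r * c * p ^ 2 * (u p) ^ 2 * (1 - u p) * (u p - a) - (1 - p * u p) = 0 := by
    intro p hp
    have hp0' : (0:ℝ) < p := lt_trans one_pos (hsub hp).1
    have hu0' : 0 < u p := lt_trans (by linarith) (hlow p hp)
    have he := heq p hp
    have hden : c * p ^ 2 * (u p) ^ 2 ≠ 0 := by positivity
    field_simp at he
    nlinarith [he]
  -- derivative of the constraint function at pH
  set U := u pH with hUdef
  set U' := u' pH with hU'def
  have hF : HasDerivAt (fun p => r * c * p ^ 2 * (u p) ^ 2 * (1 - u p) * (u p - a) - (1 - p * u p))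
      (r * c * (2 * pH * U ^ 2 * (1 - U) * (U - a) + pH ^ 2 * (2 * U * U') * (1 - U) * (U - a)
        + pH ^ 2 * U ^ 2 * (-U') * (U - a) + pH ^ 2 * U ^ 2 * (1 - U) * U') + (U + pH * U')) pH := by
    have h1 := ((((hasDerivAt_pow 2 pH).const_mul (r * c)).mul (h.pow 2)).mul
      ((hasDerivAt_const pH (1:ℝ)).sub h)).mul (h.sub_const a)
    have h2 := (hasDerivAt_const pH (1:ℝ)).sub ((hasDerivAt_id pH).mul h)
    refine (h1.sub h2).congr_deriv ?_
    simp only [Pi.mul_apply, Pi.pow_apply, Pi.sub_apply, id_eq]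
    push_cast
    ring
  have hEq0 : (fun p => r * c * p ^ 2 * (u p) ^ 2 * (1 - u p) * (u p - a) - (1 - p * u p))
      =ᶠ[nhds pH] fun _ => (0:ℝ) :=
    Filter.eventuallyEq_of_mem (isOpen_Ioo.mem_nhds hmem) (fun p hp => hzero p hp)
  have hE0 : r * c * (2 * pH * U ^ 2 * (1 - U) * (U - a) + pH ^ 2 * (2 * U * U') * (1 - U) * (U - a)
        + pH ^ 2 * U ^ 2 * (-U') * (U - a) + pH ^ 2 * U ^ 2 * (1 - U) * U') + (U + pH * U') = 0 := by
    have := (hF.congr_of_eventuallyEq hEq0.symm).unique (hasDerivAt_const pH (0:ℝ))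
    linarith [this]
  -- transversality
  have hD : 0 < -U - pH * U' := by
    nlinarith [mul_pos hr hc, mul_pos hp0 hU0, sq_nonneg pH, sq_nonneg U,
      mul_pos (mul_pos (mul_pos (mul_pos (mul_pos hr hc) hp0) hU0) (by linarith : (0:ℝ) < 1 - U)) (by linarith : (0:ℝ) < U - a),
      mul_pos (mul_pos (mul_pos (mul_pos hr hc) (by positivity : (0:ℝ) < pH ^ 2)) (by positivity : (0:ℝ) < U ^ 2)) (mul_pos (neg_pos.2 hU') (by linarith : (0:ℝ) < 2 * U - a - 1))]
  have hT : HasDerivAt (fun p => -r * u p * (2 * u p - a - 1) + m * (1 - p * u p))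
      ((-r * U' * (2 * U - a - 1) + -r * U * (2 * U')) + m * (0 - (1 * u pH + pH * U'))) pH := by
    have h1 := ((h.const_mul (-r)).mul (((h.const_mul 2).sub_const a).sub_const 1))
    have h2 := (((hasDerivAt_const pH (1:ℝ)).sub ((hasDerivAt_id pH).mul h)).const_mul m)
    exact h1.add h2
  rw [hT.deriv]
  constructor
  · nlinarith [mul_pos hm hD, mul_pos (neg_pos.2 (mul_neg_of_neg_of_pos (by linarith : -r < 0) (neg_pos.2 hU'))) (by linarith : (0:ℝ) < 4 * U - a - 1)]
  · exact hD
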